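/- Let Ā be the 5×5 matrix over F₂ = ℤ/2ℤ with rows (1,1,0,0,0), (1,1,1,0,0), (1,1,1,1,0), (0,1,1,1,1), (0,0,1,1,1), let S := Ā⁻¹ · Āᵀ, and let a₁ = (1,0,0,0,0)ᵀ and b₁ = (1,0,1,0,0)ᵀ in F₂⁵. Then the orbit {Sᵏ a₁ : k ∈ ℤ} has exactly 8 elements, the orbit {Sᵏ b₁ : k ∈ ℤ} has exactly 4 elements, these two orbits are disjoint, and their union is exactly the set of vectors x ∈ F₂⁵ with xᵀ Ā x = 1. -/

import Mathlib

/-- The matrix `S = Ā⁻¹Āᵀ`, computed explicitly. -/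
def Tmat : Matrix (Fin 5) (Fin 5) (ZMod 2) :=
  !![1,1,0,0,0; 0,0,1,0,0; 0,0,0,1,0; 1,0,0,0,1; 1,0,0,0,0]

lemma Tmat_pow8 : Tmat ^ 8 = 1 := by decide

lemma Tmat_det_isUnit : IsUnit Tmat.det :=
  Matrix.isUnit_det_of_right_inverse (B := Tmat ^ 7)
    (by rw [← pow_succ']; exact Tmat_pow8)

lemma Tmat_zpow (k : ℤ) : Tmat ^ k = Tmat ^ ((k % 8).toNat) := by
  have hu := Tmat_det_isUnit
  have h8 : Tmat ^ ((8 : ℕ) : ℤ) = 1 := by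
    rw [zpow_natCast]; exact Tmat_pow8
  have hk : k = 8 * (k / 8) + k % 8 := (Int.mul_ediv_add_emod k 8).symm
  have hnn : (0 : ℤ) ≤ k % 8 := Int.emod_nonneg k (by norm_num)
  have h1 : Tmat ^ (8 * (k / 8)) = 1 := by
    rw [Matrix.zpow_mul Tmat hu, show ((8 : ℤ) = ((8 : ℕ) : ℤ)) from rfl, h8,
      Matrix.one_zpow]
  have h2 : Tmat ^ (k % 8) = Tmat ^ ((k % 8).toNat) := by
    rw [← zpow_natCast, Int.toNat_of_nonneg hnn]
  conv_lhs => rw [hk]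
  rw [Matrix.zpow_add hu, h1, Matrix.one_mul, h2]

lemma orbit_eq (v : Fin 5 → ZMod 2) :
    {x : Fin 5 → ZMod 2 | ∃ k : ℤ, x = (Tmat ^ k).mulVec v} =
      ↑((Finset.range 8).image fun n => (Tmat ^ n).mulVec v) := by
  ext x
  simp only [Set.mem_setOf_eq, Finset.coe_image, Set.mem_image, Finset.mem_coe,
    Finset.mem_range]
  constructor
  · rintro ⟨k, rfl⟩
    refine ⟨(k % 8).toNat, ?_, ?_⟩
    · have h1 : (0 : ℤ) ≤ k % 8 := Int.emod_nonneg k (by norm_num)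
      have h2 : k % 8 < 8 := Int.emod_lt_of_pos k (by norm_num)
      omega
    · rw [Tmat_zpow k]
  · rintro ⟨n, _, rfl⟩
    exact ⟨(n : ℤ), by rw [zpow_natCast]⟩

/-- Let `Ā` be the given `5×5` matrix over `F₂ = ℤ/2ℤ`,
`S := Ā⁻¹ · Āᵀ`, `a₁ = (1,0,0,0,0)ᵀ` and `b₁ = (1,0,1,0,0)ᵀ`. Then the orbit
`{Sᵏ a₁ : k ∈ ℤ}` has exactly `8` elements, the orbit `{Sᵏ b₁ : k ∈ ℤ}` has exactly `4`
elements, these two orbits are disjoint, and their union is exactly the set of vectors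
`x ∈ F₂⁵` with `xᵀ Ā x = 1`. -/
theorem stmt_9 (A : Matrix (Fin 5) (Fin 5) (ZMod 2))
    (hA : A = !![1,1,0,0,0; 1,1,1,0,0; 1,1,1,1,0; 0,1,1,1,1; 0,0,1,1,1])
    (S : Matrix (Fin 5) (Fin 5) (ZMod 2)) (hS : S = A⁻¹ * A.transpose)
    (a₁ b₁ : Fin 5 → ZMod 2) (ha₁ : a₁ = ![1,0,0,0,0]) (hb₁ : b₁ = ![1,0,1,0,0]) :
    Set.ncard {x : Fin 5 → ZMod 2 | ∃ k : ℤ, x = (S ^ k).mulVec a₁} = 8 ∧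
    Set.ncard {x : Fin 5 → ZMod 2 | ∃ k : ℤ, x = (S ^ k).mulVec b₁} = 4 ∧
    Disjoint {x : Fin 5 → ZMod 2 | ∃ k : ℤ, x = (S ^ k).mulVec a₁}
      {x : Fin 5 → ZMod 2 | ∃ k : ℤ, x = (S ^ k).mulVec b₁} ∧
    {x : Fin 5 → ZMod 2 | ∃ k : ℤ, x = (S ^ k).mulVec a₁} ∪
        {x : Fin 5 → ZMod 2 | ∃ k : ℤ, x = (S ^ k).mulVec b₁} =
      {x : Fin 5 → ZMod 2 | dotProduct x (A.mulVec x) = 1} := by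
  have hAinv : A⁻¹ = !![1,0,0,1,1; 0,0,0,1,1; 1,1,0,0,0; 0,1,1,0,0; 1,0,1,0,1] := by
    rw [hA]; exact Matrix.inv_eq_right_inv (by decide)
  have hT : S = Tmat := by rw [hS, hAinv, hA]; decide
  subst hT ha₁ hb₁ hA
  rw [orbit_eq, orbit_eq]
  refine ⟨?_, ?_, ?_, ?_⟩
  · rw [Set.ncard_coe_finset]; decide
  · rw [Set.ncard_coe_finset]; decide
  · rw [Finset.disjoint_coe]; decide
  · rw [← Finset.coe_union]
    ext x
    simp only [Finset.mem_coe, Set.mem_setOf_eq]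
    revert x
    decide
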